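/- Let M be a free A-module of finite rank over A = k[x_1,…,x_n], let L_+ be the Lie subalgebra of Der_k(A) consisting of derivations η with constant term zero (i.e. η(x_i)(0) = 0 for all i), and let ρ : L_+ → End_A(M) be a Lie algebra homomorphism into the A-linear endomorphisms of M. Then the set of pairs (k, p), with k ∈ ℕ^n a nonzero multi-index and p ∈ {1,…,n}, such that ρ(X^k ∂_p) ≠ 0, is finite. -/

import Mathlib

open MvPolynomial

attribute [local instance 100] LieRing.ofAssociativeRing

lemma constantCoeff_derivation_apply_eq_zero
    {k : Type*} [Field k] [CharZero k] {n : ℕ}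
    (d : Derivation k (MvPolynomial (Fin n) k) (MvPolynomial (Fin n) k))
    (hd : ∀ i, constantCoeff (d (X i)) = 0) (f : MvPolynomial (Fin n) k) :
    constantCoeff (d f) = 0 := by
  induction f using MvPolynomial.induction_on with
  | C a =>
      rw [show (C a : MvPolynomial (Fin n) k) = a • 1 by
        rw [smul_eq_C_mul, mul_one]]
      simp
  | add p q hp hq => simp [hp, hq]
  | mul_X p i _ =>
      rw [Derivation.leibniz]
      simp [smul_eq_mul, hd i]

/-- The Lie subalgebra `L₊` of vector fields on affine `n`-space vanishing at the
origin: derivations `η` with `η(x_i)(0) = 0` for all `i`. -/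
noncomputable def Lplus (k : Type*) [Field k] [CharZero k] (n : ℕ) :
    LieSubalgebra k (Derivation k (MvPolynomial (Fin n) k) (MvPolynomial (Fin n) k)) where
  carrier := {d | ∀ i, constantCoeff (d (X i)) = 0}
  add_mem' := by intro a b ha hb i; simp [ha i, hb i]
  zero_mem' := by intro i; simp
  smul_mem' := by
    intro c d hd i
    simp only [Derivation.coe_smul, Pi.smul_apply, smul_eq_C_mul, map_mul, hd i, mul_zero]
  lie_mem' := by
    intro a b ha hb i
    rw [Derivation.commutator_apply]
    simp [constantCoeff_derivation_apply_eq_zero a ha,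
      constantCoeff_derivation_apply_eq_zero b hb]

lemma sub_add_single' {n : ℕ} (K : Fin n →₀ ℕ) (i : Fin n) (hi : K i ≠ 0) :
    K - Finsupp.single i 1 + Finsupp.single i 1 = K := by
  ext j
  simp only [Finsupp.add_apply, Finsupp.tsub_apply]
  rcases eq_or_ne i j with rfl | h
  · simp only [Finsupp.single_eq_same]; omega
  · simp [Finsupp.single_eq_of_ne' h]

noncomputable def eulerD (k : Type*) [Field k] (n : ℕ) :
    Derivation k (MvPolynomial (Fin n) k) (MvPolynomial (Fin n) k) :=
  mkDerivation k fun i => X i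

lemma eulerD_X {k : Type*} [Field k] {n : ℕ} (i : Fin n) :
    eulerD k n (X i) = X i := mkDerivation_X _ _ _

lemma eulerD_monomial {k : Type*} [Field k] {n : ℕ} (K : Fin n →₀ ℕ) :
    eulerD k n (monomial K (1 : k))
      = ((K.sum fun _ e => e : ℕ) : k) • monomial K (1 : k) := by
  rw [eulerD, mkDerivation_monomial, one_smul, smul_monomial, smul_eq_mul, mul_one,
    Finsupp.sum, Finsupp.sum, Nat.cast_sum, map_sum (monomial K)]
  refine Finset.sum_congr rfl fun i hi => ?_
  rw [Finsupp.mem_support_iff] at hi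
  rw [smul_eq_mul, X, monomial_mul, mul_one, sub_add_single' K i hi]

lemma lie_eulerD {k : Type*} [Field k] {n : ℕ} (K : Fin n →₀ ℕ) (p : Fin n) :
    ⁅eulerD k n, ((monomial K (1 : k) : MvPolynomial (Fin n) k) • pderiv p :
        Derivation k (MvPolynomial (Fin n) k) (MvPolynomial (Fin n) k))⁆
      = (((K.sum fun _ e => e : ℕ) : k) - 1) •
          ((monomial K (1 : k) : MvPolynomial (Fin n) k) • pderiv p) := by
  apply derivation_ext
  intro i
  rw [Derivation.commutator_apply]
  rcases eq_or_ne i p with rfl | h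
  · simp only [Derivation.smul_apply, pderiv_X_self, smul_eq_mul, mul_one, eulerD_X]
    rw [eulerD_monomial, sub_smul, one_smul]
  · simp only [Derivation.smul_apply, pderiv_X_of_ne h, eulerD_X, smul_eq_mul, mul_zero,
      map_zero, sub_zero, smul_zero, sub_self]

-- finiteness of fibers lemma
lemma fiber_finite {n m : ℕ} :
    {x : (Fin n →₀ ℕ) × Fin n | (x.1.sum fun _ e => e) = m}.Finite := by
  have h1 : {K : Fin n →₀ ℕ | ∀ i, K i ≤ m}.Finite := by
    have : {K : Fin n →₀ ℕ | ∀ i, K i ≤ m}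
        = Finsupp.equivFunOnFinite ⁻¹' (Set.univ.pi fun _ : Fin n => Set.Iic m) := by
      ext K; simp only [Set.mem_setOf_eq, Set.mem_preimage, Set.mem_pi, Set.mem_univ,
        forall_true_left, Set.mem_Iic, Finsupp.equivFunOnFinite_apply]
    rw [this]
    exact (Set.Finite.pi fun _ => Set.finite_Iic m).preimage
      (Equiv.injective _).injOn
  refine ((h1.prod (Set.finite_univ (α := Fin n)))).subset ?_
  rintro ⟨K, p⟩ hx
  refine ⟨fun i => ?_, trivial⟩
  simp only [Set.mem_setOf_eq] at hx
  by_cases hi : i ∈ K.support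
  · calc K i ≤ ∑ j ∈ K.support, K j :=
        Finset.single_le_sum (fun j _ => Nat.zero_le _) hi
    _ = m := hx
  · simp [Finsupp.notMem_support_iff.1 hi]


set_option maxHeartbeats 1600000 in
/-- Let `M` be a free `A`-module of finite rank over
`A = k[x_1, …, x_n]` and `ρ : L₊ → End_A(M)` a Lie algebra homomorphism into the
`A`-linear endomorphisms of `M`.  Then only finitely many pairs `(K, p)` with `K ≠ 0`
satisfy `ρ(X^K ∂_p) ≠ 0`. -/
theorem finitely_many_nonzero_rho_of_A_linear_action
    (k : Type*) [Field k] [IsAlgClosed k] [CharZero k] (n : ℕ)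
    (M : Type*) [AddCommGroup M] [Module k M]
    [Module (MvPolynomial (Fin n) k) M] [IsScalarTower k (MvPolynomial (Fin n) k) M]
    [Module.Free (MvPolynomial (Fin n) k) M] [Module.Finite (MvPolynomial (Fin n) k) M]
    (ρ : Lplus k n →ₗ⁅k⁆ Module.End (MvPolynomial (Fin n) k) M) :
    {x : (Fin n →₀ ℕ) × Fin n | x.1 ≠ 0 ∧
      ∃ d : Lplus k n,
        (d : Derivation k (MvPolynomial (Fin n) k) (MvPolynomial (Fin n) k))
          = (monomial x.1 (1 : k) : MvPolynomial (Fin n) k) • pderiv x.2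
        ∧ ρ d ≠ 0}.Finite := by
  classical
  let F := FractionRing (MvPolynomial (Fin n) k)
  let ι := Module.Free.ChooseBasisIndex (MvPolynomial (Fin n) k) M
  let b : Module.Basis ι (MvPolynomial (Fin n) k) M := Module.Free.chooseBasis (MvPolynomial (Fin n) k) M
  let φ : Module.End (MvPolynomial (Fin n) k) M ≃ₐ[(MvPolynomial (Fin n) k)] Matrix ι ι (MvPolynomial (Fin n) k) := LinearMap.toMatrixAlgEquiv b
  let f : MvPolynomial (Fin n) k →+* F := algebraMap (MvPolynomial (Fin n) k) F
  have hf : Function.Injective f := IsFractionRing.injective (MvPolynomial (Fin n) k) F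
  haveI : CharZero (MvPolynomial (Fin n) k) := charZero_of_injective_algebraMap (C_injective (Fin n) k)
  haveI : CharZero F := charZero_of_injective_algebraMap hf
  let ψ : Matrix ι ι (MvPolynomial (Fin n) k) →+* Matrix ι ι F := f.mapMatrix
  have hψ : Function.Injective ψ := by
    intro X Y h
    apply Matrix.ext
    intro i j
    have := congrArg (fun m => m i j) h
    simp only [ψ, RingHom.mapMatrix_apply, Matrix.map_apply] at this
    exact hf this
  have hEL : eulerD k n ∈ Lplus k n := by
    intro i
    rw [eulerD_X]
    simp
  let EL : Lplus k n := ⟨eulerD k n, hEL⟩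
  let T : Matrix ι ι F := ψ (φ (ρ EL))
  let D : Module.End F (Matrix ι ι F) := LinearMap.mulLeft F T - LinearMap.mulRight F T
  have hD : Set.Finite (Module.End.HasEigenvalue D) := Module.End.finite_hasEigenvalue D
  have hψs : ∀ (a : MvPolynomial (Fin n) k) (X : Matrix ι ι (MvPolynomial (Fin n) k)), ψ (a • X) = f a • ψ X := by
    intro a X
    ext i j
    simp [ψ, Matrix.map_apply, smul_eq_mul, map_mul]
  have key : ∀ x : (Fin n →₀ ℕ) × Fin n,
      (x.1 ≠ 0 ∧ ∃ d : Lplus k n,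
        (d : Derivation k (MvPolynomial (Fin n) k) (MvPolynomial (Fin n) k))
          = (monomial x.1 (1 : k) : MvPolynomial (Fin n) k) • pderiv x.2 ∧ ρ d ≠ 0) →
      Module.End.HasEigenvalue D (((x.1.sum fun _ e => e : ℕ) : F) - 1) := by
    rintro ⟨K, p⟩ ⟨hK, d, hd, hρ⟩
    set m : ℕ := K.sum fun _ e => e with hm
    set c : k := (m : k) - 1 with hc
    have h1 : ⁅EL, d⁆ = c • d := by
      apply Subtype.ext
      rw [LieSubalgebra.coe_bracket, Submodule.coe_smul_of_tower]
      show ⁅eulerD k n, (d : Derivation k (MvPolynomial (Fin n) k) (MvPolynomial (Fin n) k))⁆ = c • (d : Derivation k (MvPolynomial (Fin n) k) (MvPolynomial (Fin n) k))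
      rw [hd, lie_eulerD]
    have hsm : c • ρ d = (C c : MvPolynomial (Fin n) k) • ρ d := by
      rw [← MvPolynomial.algebraMap_eq, algebraMap_smul]
    have h2 : ρ EL * ρ d - ρ d * ρ EL = (C c : MvPolynomial (Fin n) k) • ρ d := by
      rw [← Ring.lie_def, ← LieHom.map_lie, h1, map_smul, hsm]
    have h3 : T * ψ (φ (ρ d)) - ψ (φ (ρ d)) * T = ((m : F) - 1) • ψ (φ (ρ d)) := by
      have h4 : φ (ρ EL) * φ (ρ d) - φ (ρ d) * φ (ρ EL) = (C c : MvPolynomial (Fin n) k) • φ (ρ d) := by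
        rw [← map_mul φ (ρ EL) (ρ d), ← map_mul φ (ρ d) (ρ EL), ← map_sub φ]
        conv_lhs => rw [h2]
        exact map_smul φ.toLinearEquiv (C c) (ρ d)
      have h5 : f (C c) = (m : F) - 1 := by
        have : (C c : MvPolynomial (Fin n) k) = (m : MvPolynomial (Fin n) k) - 1 := by
          rw [hc, map_sub, map_one, map_natCast]
        rw [this, map_sub, map_one, map_natCast]
      rw [show T * ψ (φ (ρ d)) - ψ (φ (ρ d)) * T = ψ (φ (ρ EL) * φ (ρ d) - φ (ρ d) * φ (ρ EL))
          by rw [map_sub, map_mul, map_mul],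
        h4, hψs, h5]
    have he0 : ψ (φ (ρ d)) ≠ 0 := by
      intro h
      apply hρ
      apply φ.injective
      apply hψ
      rw [h, map_zero, map_zero]
    exact Module.End.hasEigenvalue_of_hasEigenvector
      ⟨Module.End.mem_eigenspace_iff.2 (by
        show T * ψ (φ (ρ d)) - ψ (φ (ρ d)) * T = _
        exact h3), he0⟩
  have hSn : {m : ℕ | Module.End.HasEigenvalue D ((m : F) - 1)}.Finite := by
    have hinj : Function.Injective fun m : ℕ => ((m : F) - 1) := by
      intro a b h
      simp only [sub_left_inj, Nat.cast_inj] at h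
      exact h
    exact hD.preimage hinj.injOn
  refine (hSn.biUnion fun m _ => fiber_finite (n := n) (m := m)).subset ?_
  rintro x hx
  exact Set.mem_biUnion (key x hx) rfl
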